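/- A finite invertible automaton A over alphabet X is polynomial (i.e., distinct nontrivial simple directed cycles in A are pairwise disjoint) if and only if the number of directed paths of length n in A avoiding the trivial state is bounded by a polynomial in n. -/

import Mathlib

/-- A finite invertible automaton over the alphabet `X`. -/
structure Automaton (X : Type*) where
  S : Type*
  [fin : Fintype S]
  trans : S → X → S
  out : S → X → X
  inv : ∀ s : S, Function.Bijective (out s)

attribute [instance] Automaton.fin

namespace Automaton

variable {X : Type*} (A : Automaton X)

/-- A simple directed cycle in (the Moore diagram of) the automaton `A`, recorded as a
nonempty list of (state, letter) pairs with pairwise distinct states, consecutive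
transitions, and a closing transition. -/
def IsCycle (c : List (A.S × X)) : Prop :=
  c ≠ [] ∧ (c.map Prod.fst).Nodup ∧
    c.Chain' (fun p q => A.trans p.1 p.2 = q.1) ∧
    ∀ h : c ≠ [], A.trans (c.getLast h).1 (c.getLast h).2 = (c.head h).1

/-- The number of directed paths of length `n` in `A` avoiding the state `e`
(paths in the Moore diagram, i.e. recorded together with the letters traversed). -/
noncomputable def pathCount (e : A.S) (n : ℕ) : ℕ :=
  Nat.card {px : (Fin (n + 1) → A.S) × (Fin n → X) //
    (∀ i, px.1 i ≠ e) ∧ ∀ i : Fin n, A.trans (px.1 i.castSucc) (px.2 i) = px.1 i.succ}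

end Automaton

namespace Aut7
open List

variable {X : Type*}

def Good (A : Automaton X) (e : A.S) (p : A.S × X) : Prop :=
  ∃ c, A.IsCycle c ∧ e ∉ c.map Prod.fst ∧ p ∈ c

lemma split_of_not_nodup_map {α β : Type*} (f : α → β) :
    ∀ {l : List α}, ¬ (l.map f).Nodup →
      ∃ (l1 : List α) (x : α) (l2 : List α) (y : α) (l3 : List α), l = l1 ++ x :: (l2 ++ y :: l3) ∧ f x = f y := by
  intro l
  induction l with
  | nil => intro h; simp at h
  | cons a t ih =>
    intro h
    by_cases ht : (t.map f).Nodup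
    · have ha : f a ∈ t.map f := by
        by_contra hfa
        exact h (by simp [List.nodup_cons, hfa, ht])
      obtain ⟨y, hy, hfy⟩ := List.mem_map.mp ha
      obtain ⟨s, r, rfl⟩ := List.append_of_mem hy
      exact ⟨[], a, s, y, r, by simp, hfy.symm⟩
    · obtain ⟨l1, x, l2, y, l3, rfl, hxy⟩ := ih ht
      exact ⟨a :: l1, x, l2, y, l3, by simp, hxy⟩

/-- Every element of a closed walk avoiding `e` lies on a simple cycle avoiding `e`. -/
lemma cw_good (A : Automaton X) (e : A.S) :
    ∀ (N : ℕ) (w : List (A.S × X)), w.length ≤ N → ∀ (hne : w ≠ []),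
      w.Chain' (fun p q => A.trans p.1 p.2 = q.1) →
      (A.trans (w.getLast hne).1 (w.getLast hne).2 = (w.head hne).1) →
      e ∉ w.map Prod.fst → ∀ p ∈ w, Good A e p := by
  intro N
  induction N with
  | zero =>
    intro w hlen hne
    cases w with
    | nil => exact absurd rfl hne
    | cons a t => simp at hlen
  | succ N ih =>
    intro w hlen hne hchain hclose havoid p hp
    by_cases hnd : (w.map Prod.fst).Nodup
    · exact ⟨w, ⟨hne, hnd, hchain, fun _ => hclose⟩, havoid, hp⟩
    obtain ⟨l1, x, l2, y, l3, hw, hxy⟩ := split_of_not_nodup_map _ hnd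
    subst hw
    have hbne : (x :: l2) ≠ [] := List.cons_ne_nil _ _
    have hvne : (y :: l3) ≠ [] := List.cons_ne_nil _ _
    -- chain on the suffix (x :: l2) ++ (y :: l3)
    have hsuf : ((x :: l2) ++ (y :: l3)).Chain' (fun p q => A.trans p.1 p.2 = q.1) :=
      hchain.suffix ⟨l1, by simp⟩
    rw [List.Chain', List.isChain_append] at hsuf
    obtain ⟨hchm, hchv, hJ1⟩ := hsuf
    have hchu : l1.Chain' (fun p q => A.trans p.1 p.2 = q.1) :=
      hchain.prefix ⟨x :: (l2 ++ y :: l3), rfl⟩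
    have hJ2 : ∀ a ∈ l1.getLast?, A.trans a.1 a.2 = x.1 := by
      have h := hchain
      rw [List.Chain', List.isChain_append] at h
      exact fun a ha => h.2.2 a ha x (by simp)
    -- the inner loop b = x :: l2
    have hbclose : A.trans ((x :: l2).getLast hbne).1 ((x :: l2).getLast hbne).2
        = ((x :: l2).head hbne).1 := by
      have := hJ1 ((x :: l2).getLast hbne) (List.getLast_mem_getLast? _) y (by simp)
      simpa [hxy] using this
    have hbavoid : e ∉ (x :: l2).map Prod.fst := by
      intro hmem
      apply havoid
      simp only [List.map_append, List.map_cons, List.mem_append, List.mem_cons] at hmem ⊢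
      tauto
    -- the outer walk w' = l1 ++ y :: l3
    have hw'ne : (l1 ++ y :: l3) ≠ [] := by simp
    have hch' : (l1 ++ (y :: l3)).Chain' (fun p q => A.trans p.1 p.2 = q.1) := by
      rw [List.Chain', List.isChain_append]
      refine ⟨hchu, hchv, ?_⟩
      intro a ha b hb
      have hby : b = y := by simpa using hb.symm
      rw [hby, ← hxy]
      exact hJ2 a ha
    have hgl : (l1 ++ y :: l3).getLast hw'ne = (y :: l3).getLast hvne :=
      List.getLast_append_of_ne_nil _ hvne
    have hglw : (l1 ++ x :: (l2 ++ y :: l3)).getLast hne = (y :: l3).getLast hvne := by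
      rw [List.getLast_append_of_ne_nil _ (by simp : x :: (l2 ++ y :: l3) ≠ [])]
      rw [List.getLast_cons (by simp : l2 ++ y :: l3 ≠ [])]
      exact List.getLast_append_of_ne_nil _ hvne
    have hhead : ((l1 ++ y :: l3).head hw'ne).1
        = ((l1 ++ x :: (l2 ++ y :: l3)).head hne).1 := by
      cases l1 with
      | nil => simpa using hxy.symm
      | cons a u => simp
    have hclose' : A.trans ((l1 ++ y :: l3).getLast hw'ne).1
        ((l1 ++ y :: l3).getLast hw'ne).2 = ((l1 ++ y :: l3).head hw'ne).1 := by
      rw [hgl, hhead, ← hglw]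
      exact hclose
    have havoid' : e ∉ (l1 ++ y :: l3).map Prod.fst := by
      intro hmem
      apply havoid
      simp only [List.map_append, List.map_cons, List.mem_append, List.mem_cons] at hmem ⊢
      tauto
    have hlw : (l1 ++ x :: (l2 ++ y :: l3)).length
        = l1.length + l2.length + l3.length + 2 := by simp; omega
    have hp' : p ∈ (x :: l2) ∨ p ∈ (l1 ++ y :: l3) := by
      simp only [List.mem_append, List.mem_cons] at hp ⊢
      tauto
    rcases hp' with hpb | hpw
    · exact ih (x :: l2) (by simp at hlw hlen ⊢; omega) hbne hchm hbclose hbavoid p hpb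
    · exact ih (l1 ++ y :: l3) (by simp at hlw hlen ⊢; omega) hw'ne hch' hclose' havoid' p hpw

/-- source states of non-cycle steps never recur -/
lemma source_ne (A : Automaton X) (e : A.S) (F : ℕ → A.S) (G : ℕ → X) (n : ℕ)
    (htr : ∀ m, m < n → A.trans (F m) (G m) = F (m + 1))
    (hav : ∀ m, m ≤ n → F m ≠ e)
    (i j : ℕ) (hij : i < j) (hj : j ≤ n)
    (hbad : ¬ Good A e (F i, G i)) :
    F j ≠ F i := by
  intro hF
  set w : List (A.S × X) := List.ofFn (fun t : Fin (j - i) => (F (i + t), G (i + t))) with hw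
  have hne : w ≠ [] := by
    rw [hw, Ne, List.ofFn_eq_nil_iff]; omega
  have hchain : w.Chain' (fun p q => A.trans p.1 p.2 = q.1) := by
    rw [hw, List.Chain', List.isChain_ofFn]
    intro t ht
    simp only
    rw [htr (i + t) (by omega), Nat.add_assoc]
  have hlast : w.getLast hne = (F (j - 1), G (j - 1)) := by
    have h := List.getLast_ofFn (f := fun t : Fin (j - i) => (F (i + t), G (i + t))) hne
    rw [h]
    simp only
    congr 2 <;> omega
  have hhead : w.head hne = (F i, G i) := by
    have h := List.head_ofFn (f := fun t : Fin (j - i) => (F (i + t), G (i + t))) hne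
    rw [h]
    simp
  have hclose : A.trans (w.getLast hne).1 (w.getLast hne).2 = (w.head hne).1 := by
    rw [hlast, hhead]
    simp only
    rw [htr (j - 1) (by omega)]
    rw [(by omega : j - 1 + 1 = j), hF]
  have havoid : e ∉ w.map Prod.fst := by
    rw [hw]
    intro hmem
    simp only [List.map_ofFn] at hmem
    rw [List.mem_ofFn] at hmem
    obtain ⟨t, ht⟩ := hmem
    exact hav (i + t) (by omega) (by simpa using ht)
  have hmem : (F i, G i) ∈ w := by
    rw [hw]
    refine (List.mem_ofFn).mpr ⟨⟨0, by omega⟩, by simp⟩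
  exact hbad (cw_good A e w.length w le_rfl hne hchain hclose havoid _ hmem)

/-- uniqueness of the cycle letter at a state -/
lemma good_letter_unique (A : Automaton X) (e : A.S)
    (H : ∀ c₁ c₂ : List (A.S × X), A.IsCycle c₁ → A.IsCycle c₂ →
        e ∉ c₁.map Prod.fst → e ∉ c₂.map Prod.fst →
        (∃ s, s ∈ c₁.map Prod.fst ∧ s ∈ c₂.map Prod.fst) →
        ∃ m : ℕ, c₂ = c₁.rotate m)
    (s : A.S) (x y : X) (hx : Good A e (s, x)) (hy : Good A e (s, y)) : x = y := by
  obtain ⟨c₁, hc₁, he₁, hm₁⟩ := hx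
  obtain ⟨c₂, hc₂, he₂, hm₂⟩ := hy
  obtain ⟨m, rfl⟩ := H c₁ c₂ hc₁ hc₂ he₁ he₂
    ⟨s, List.mem_map_of_mem (f := Prod.fst) hm₁, List.mem_map_of_mem (f := Prod.fst) hm₂⟩
  have hm₂' : (s, y) ∈ c₁ := List.mem_rotate.mp hm₂
  have := List.inj_on_of_nodup_map hc₁.2.1 hm₁ hm₂' rfl
  exact congrArg Prod.snd this

open scoped Classical in
/-- the list of special (non-cycle) steps of a walk -/
noncomputable def sList (A : Automaton X) (e : A.S) {n : ℕ}
    (f : Fin (n + 1) → A.S) (g : Fin n → X) : List (Fin n × X) :=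
  (List.finRange n).filterMap
    (fun i => if Good A e (f i.castSucc, g i) then none else some (i, g i))

lemma mem_sList {A : Automaton X} {e : A.S} {n : ℕ}
    {f : Fin (n + 1) → A.S} {g : Fin n → X} {i : Fin n} {x : X} :
    (i, x) ∈ sList A e f g ↔ ¬ Good A e (f i.castSucc, g i) ∧ x = g i := by
  classical
  rw [sList, List.mem_filterMap]
  constructor
  · rintro ⟨a, -, ha⟩
    by_cases h : Good A e (f a.castSucc, g a)
    · rw [if_pos h] at ha; exact absurd ha (by simp)
    · rw [if_neg h] at ha
      obtain ⟨h1, h2⟩ := Prod.mk.injEq .. ▸ Option.some_injective _ ha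
      subst h1; subst h2
      exact ⟨by convert h, rfl⟩
  · rintro ⟨h, rfl⟩
    exact ⟨i, List.mem_finRange i, by rw [if_neg (by convert h)]⟩

lemma sList_nodup {A : Automaton X} {e : A.S} {n : ℕ}
    {f : Fin (n + 1) → A.S} {g : Fin n → X} : (sList A e f g).Nodup := by
  classical
  apply List.Nodup.filterMap _ (List.nodup_finRange n)
  intro a a' b hb hb'
  by_cases h : Good A e (f a.castSucc, g a)
  · rw [Option.mem_def, if_pos h] at hb; exact absurd hb (by simp)
  by_cases h' : Good A e (f a'.castSucc, g a')
  · rw [Option.mem_def, if_pos h'] at hb'; exact absurd hb' (by simp)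
  rw [Option.mem_def, if_neg h] at hb
  rw [Option.mem_def, if_neg h'] at hb'
  have h1 := Option.some_injective _ hb
  have h2 := Option.some_injective _ hb'
  have h3 : (a, g a) = (a', g a') := h1.trans h2.symm
  exact congrArg Prod.fst h3

lemma sList_length (A : Automaton X) (e : A.S) {n : ℕ}
    (f : Fin (n + 1) → A.S) (g : Fin n → X)
    (hav : ∀ i, f i ≠ e)
    (htr : ∀ i : Fin n, A.trans (f i.castSucc) (g i) = f i.succ) :
    (sList A e f g).length ≤ Fintype.card A.S := by
  classical
  have hnodup : ((sList A e f g).map (fun p => f p.1.castSucc)).Nodup := by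
    apply List.Nodup.map_on _ sList_nodup
    rintro ⟨i, xi⟩ hi ⟨j, xj⟩ hj hfij
    have hi' := mem_sList.mp hi
    have hj' := mem_sList.mp hj
    -- set up ℕ-indexed walk
    set F : ℕ → A.S := fun m => if h : m ≤ n then f ⟨m, by omega⟩ else f 0 with hF
    set G : ℕ → X := fun m => if h : m < n then g ⟨m, h⟩ else g i with hG
    have htr' : ∀ m, m < n → A.trans (F m) (G m) = F (m + 1) := by
      intro m hm
      rw [hF, hG]
      simp only [dif_pos (by omega : m ≤ n), dif_pos hm, dif_pos (by omega : m + 1 ≤ n)]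
      simpa using htr ⟨m, hm⟩
    have hav' : ∀ m, m ≤ n → F m ≠ e := by
      intro m hm
      rw [hF]; simp only [dif_pos hm]; exact hav _
    have hFi : ∀ k : Fin n, F k = f k.castSucc := by
      intro k
      rw [hF]; simp only [dif_pos (by omega : (k : ℕ) ≤ n)]
      exact congrArg f (Fin.ext (by simp))
    have hGi : ∀ k : Fin n, G k = g k := by
      intro k
      rw [hG]; simp only [dif_pos k.isLt]
    by_contra hne
    have hne' : (i : ℕ) ≠ (j : ℕ) := by
      intro h
      apply hne
      have : i = j := Fin.ext h
      subst this
      rw [hi'.2, hj'.2]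
    rcases Nat.lt_or_ge i j with hlt | hge
    · refine source_ne A e F G n htr' hav' i j hlt (by omega) ?_ ?_
      · rw [hFi i, hGi i]
        exact (mem_sList.mp hi).1
      · rw [hFi i, hFi j]
        exact hfij.symm
    · have hlt : (j : ℕ) < i := by omega
      refine source_ne A e F G n htr' hav' j i hlt (by omega) ?_ ?_
      · rw [hFi j, hGi j]
        exact (mem_sList.mp hj).1
      · rw [hFi i, hFi j]
        exact hfij
  calc (sList A e f g).length
      = ((sList A e f g).map (fun p => f p.1.castSucc)).length := (List.length_map _).symm
    _ ≤ Fintype.card A.S := hnodup.length_le_card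

lemma forward (A : Automaton X) [Fintype X] (e : A.S)
    (H : ∀ c₁ c₂ : List (A.S × X), A.IsCycle c₁ → A.IsCycle c₂ →
        e ∉ c₁.map Prod.fst → e ∉ c₂.map Prod.fst →
        (∃ s, s ∈ c₁.map Prod.fst ∧ s ∈ c₂.map Prod.fst) →
        ∃ m : ℕ, c₂ = c₁.rotate m) (n : ℕ) :
    A.pathCount e n ≤ (Fintype.card A.S * (Fintype.card X + 1) ^ Fintype.card A.S) *
      (n + 1) ^ Fintype.card A.S := by
  classical
  set K := Fintype.card A.S with hK
  rw [Automaton.pathCount]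
  set W := {px : (Fin (n + 1) → A.S) × (Fin n → X) //
    (∀ i, px.1 i ≠ e) ∧ ∀ i : Fin n, A.trans (px.1 i.castSucc) (px.2 i) = px.1 i.succ} with hW
  set enc : W → A.S × (Fin K → Option (Fin n × X)) :=
    fun px => (px.1.1 0, fun j => (sList A e px.1.1 px.1.2)[(j : ℕ)]?) with henc
  have hinj : Function.Injective enc := by
    rintro ⟨⟨f₁, g₁⟩, hav₁, htr₁⟩ ⟨⟨f₂, g₂⟩, hav₂, htr₂⟩ h
    rw [henc, Prod.mk.injEq] at h
    obtain ⟨h0, hL'⟩ := h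
    simp only at h0 hL'
    have hlen₁ := sList_length A e f₁ g₁ hav₁ htr₁
    have hlen₂ := sList_length A e f₂ g₂ hav₂ htr₂
    have hL : sList A e f₁ g₁ = sList A e f₂ g₂ := by
      apply List.ext_getElem?
      intro m
      by_cases hm : m < K
      · exact congrFun hL' ⟨m, hm⟩
      · rw [List.getElem?_eq_none (by omega), List.getElem?_eq_none (by omega)]
    have hg : ∀ i : Fin n, f₁ i.castSucc = f₂ i.castSucc → g₁ i = g₂ i := by
      intro i hf
      by_cases h1 : Good A e (f₁ i.castSucc, g₁ i)
      · by_cases h2 : Good A e (f₂ i.castSucc, g₂ i)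
        · exact good_letter_unique A e H (f₁ i.castSucc) _ _ h1 (hf ▸ h2)
        · have : (i, g₂ i) ∈ sList A e f₂ g₂ := mem_sList.mpr ⟨h2, rfl⟩
          rw [← hL] at this
          exact absurd h1 (mem_sList.mp this).1
      · have : (i, g₁ i) ∈ sList A e f₁ g₁ := mem_sList.mpr ⟨h1, rfl⟩
        rw [hL] at this
        exact (mem_sList.mp this).2
    have key : ∀ m : ℕ, ∀ hm : m ≤ n, f₁ ⟨m, by omega⟩ = f₂ ⟨m, by omega⟩ := by
      intro m
      induction m with
      | zero => intro _; exact h0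
      | succ m ihm =>
        intro hm
        have hmn : m < n := by omega
        have hf : f₁ (⟨m, hmn⟩ : Fin n).castSucc = f₂ (⟨m, hmn⟩ : Fin n).castSucc := by
          simpa using ihm (by omega)
        have hgm := hg ⟨m, hmn⟩ hf
        have e1 := htr₁ ⟨m, hmn⟩
        have e2 := htr₂ ⟨m, hmn⟩
        simp only at e1 e2
        have : f₁ (⟨m, hmn⟩ : Fin n).succ = f₂ (⟨m, hmn⟩ : Fin n).succ := by
          rw [← e1, ← e2, hf, hgm]
        simpa using this
    have hfeq : f₁ = f₂ := by
      funext i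
      have := key i.1 (by omega)
      simpa using this
    have hgeq : g₁ = g₂ := by
      funext i
      exact hg i (by rw [hfeq])
    subst hfeq; subst hgeq; rfl
  have hle : Nat.card W ≤ Nat.card (A.S × (Fin K → Option (Fin n × X))) :=
    Nat.card_le_card_of_injective enc hinj
  have hcard : Nat.card (A.S × (Fin K → Option (Fin n × X)))
      = Fintype.card A.S * (n * Fintype.card X + 1) ^ K := by
    rw [Nat.card_eq_fintype_card, Fintype.card_prod, Fintype.card_fun]
    simp [Fintype.card_option, Nat.mul_comm]
  refine hle.trans (hcard.le.trans ?_)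
  have h1 : n * Fintype.card X + 1 ≤ (Fintype.card X + 1) * (n + 1) := by nlinarith
  calc Fintype.card A.S * (n * Fintype.card X + 1) ^ K
      ≤ Fintype.card A.S * ((Fintype.card X + 1) * (n + 1)) ^ K := by
        exact Nat.mul_le_mul_left _ (Nat.pow_le_pow_left h1 K)
    _ = Fintype.card A.S * (Fintype.card X + 1) ^ K * (n + 1) ^ K := by
        rw [mul_pow, mul_assoc]

/-- a loop based at `s` -/
def IsLoopAt (A : Automaton X) (s : A.S) (w : List (A.S × X)) : Prop :=
  w ≠ [] ∧ w.Chain' (fun p q => A.trans p.1 p.2 = q.1) ∧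
    ∀ h : w ≠ [], (w.head h).1 = s ∧ A.trans (w.getLast h).1 (w.getLast h).2 = s

lemma IsLoopAt.append {A : Automaton X} {s : A.S} {w₁ w₂ : List (A.S × X)}
    (h₁ : IsLoopAt A s w₁) (h₂ : IsLoopAt A s w₂) : IsLoopAt A s (w₁ ++ w₂) := by
  obtain ⟨hne₁, hch₁, hh₁⟩ := h₁
  obtain ⟨hne₂, hch₂, hh₂⟩ := h₂
  refine ⟨by simp [hne₁], ?_, ?_⟩
  · rw [List.Chain', List.isChain_append]
    refine ⟨hch₁, hch₂, ?_⟩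
    intro a ha b hb
    obtain ⟨ha', rfl⟩ := List.mem_getLast?_eq_getLast ha
    have hb' : b = w₂.head hne₂ := by
      rwa [List.head?_eq_head hne₂, Option.mem_def, Option.some_inj, eq_comm] at hb
    rw [hb', (hh₂ hne₂).1]
    exact (hh₁ _).2
  · intro h
    constructor
    · rw [List.head_append_of_ne_nil hne₁]
      exact (hh₁ hne₁).1
    · rw [List.getLast_append_of_ne_nil _ hne₂]
      exact (hh₂ hne₂).2

lemma isCycle_rotate_one {A : Automaton X} {c : List (A.S × X)} (hc : A.IsCycle c) :
    A.IsCycle (c.rotate 1) := by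
  obtain ⟨hne, hnd, hch, hcl⟩ := hc
  cases c with
  | nil => exact absurd rfl hne
  | cons a t =>
    have hrot : (a :: t).rotate 1 = t ++ [a] := by
      rw [List.rotate_cons_succ, List.rotate_zero]
    rw [hrot]
    refine ⟨by simp, ?_, ?_, ?_⟩
    · have hperm : ((t ++ [a]).map Prod.fst).Perm ((a :: t).map Prod.fst) := by
        simp only [List.map_append, List.map_cons, List.map_nil]
        exact List.perm_append_singleton _ _
      exact hperm.nodup_iff.mpr hnd
    · cases t with
      | nil => exact List.isChain_singleton _
      | cons b t' =>
        rw [List.Chain', List.isChain_append]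
        rw [List.Chain', List.isChain_cons_cons] at hch
        refine ⟨hch.2, List.isChain_singleton _, ?_⟩
        intro p hp q hq
        obtain ⟨hp', rfl⟩ := List.mem_getLast?_eq_getLast hp
        have hq' : q = a := by
          have := hq; simp only [List.head?_cons, Option.mem_def, Option.some_inj] at this
          exact this.symm
        subst hq'
        have := hcl (by simp)
        rw [List.getLast_cons (by simp)] at this
        simp only [List.head_cons] at this
        exact this
    · intro h
      rw [List.getLast_append_of_ne_nil _ (by simp : [a] ≠ []), List.getLast_singleton]
      cases t with
      | nil =>
        simpa using hcl hne
      | cons b t' =>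
        rw [List.Chain', List.isChain_cons_cons] at hch
        rw [List.head_append_of_ne_nil (by simp : (b :: t') ≠ [])]
        simpa using hch.1

lemma isCycle_rotate {A : Automaton X} {c : List (A.S × X)} (hc : A.IsCycle c) (m : ℕ) :
    A.IsCycle (c.rotate m) := by
  induction m with
  | zero => simpa using hc
  | succ m ih =>
    have : c.rotate (m + 1) = (c.rotate m).rotate 1 := by rw [List.rotate_rotate]
    rw [this]
    exact isCycle_rotate_one ih

lemma isLoopAt_of_cycle {A : Automaton X} {c : List (A.S × X)} (hc : A.IsCycle c)
    (hne : c ≠ []) (s : A.S) (hs : (c.head hne).1 = s) : IsLoopAt A s c :=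
  ⟨hne, hc.2.2.1, fun h => ⟨hs, by rw [hc.2.2.2 h, hs]⟩⟩

/-- repeated traversal of a loop -/
lemma isLoopAt_join_replicate {A : Automaton X} {s : A.S} {d : List (A.S × X)}
    (hd : IsLoopAt A s d) : ∀ m : ℕ, 1 ≤ m → IsLoopAt A s ((List.replicate m d).flatten)
  | 1, _ => by simpa using hd
  | (m + 2), _ => by
    rw [List.replicate_succ, List.flatten_cons]
    exact hd.append (isLoopAt_join_replicate hd (m + 1) (by omega))

lemma length_join_replicate {α : Type*} (m : ℕ) (d : List α) :
    ((List.replicate m d).flatten).length = m * d.length := by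
  induction m with
  | zero => simp
  | succ m ih => rw [List.replicate_succ, List.flatten_cons, List.length_append, ih]; ring

lemma mem_join_replicate {α : Type*} {m : ℕ} {d : List α} {p : α} :
    p ∈ (List.replicate m d).flatten → p ∈ d := by
  intro hp
  obtain ⟨l, hl, hpl⟩ := List.mem_flatten.mp hp
  rwa [List.eq_of_mem_replicate hl] at hpl

lemma subset_join_replicate {α : Type*} {m : ℕ} (hm : 1 ≤ m) (d : List α) :
    d ⊆ (List.replicate m d).flatten := by
  obtain ⟨m', rfl⟩ : ∃ m', m = m' + 1 := ⟨m - 1, by omega⟩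
  rw [List.replicate_succ, List.flatten_cons]
  exact fun p hp => List.mem_append_left _ hp

lemma isLoopAt_flatten {A : Automaton X} {s : A.S} :
    ∀ (ls : List (List (A.S × X))), ls ≠ [] → (∀ l ∈ ls, IsLoopAt A s l) →
      IsLoopAt A s ls.flatten
  | [], h, _ => absurd rfl h
  | [x], _, hl => by simpa using hl x (by simp)
  | (x :: y :: r), _, hl => by
    rw [List.flatten_cons]
    exact (hl x (by simp)).append
      (isLoopAt_flatten (y :: r) (by simp) (fun l h => hl l (List.mem_cons_of_mem _ h)))

lemma length_flatten_const {α : Type*} {N : ℕ} :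
    ∀ (ls : List (List α)), (∀ l ∈ ls, l.length = N) → ls.flatten.length = ls.length * N := by
  intro ls
  induction ls with
  | nil => simp
  | cons x r ih =>
    intro h
    rw [List.flatten_cons, List.length_append, h x (by simp), ih (fun l hl => h l (by simp [hl]))]
    simp [List.length_cons]
    ring

/-- the word indexed by a boolean sequence -/
def word {A : Automaton X} (B : Bool → List (A.S × X)) {k : ℕ} (ε : Fin k → Bool) :
    List (A.S × X) :=
  (List.ofFn (fun j => B (ε j))).flatten

lemma word_succ {A : Automaton X} (B : Bool → List (A.S × X)) {k : ℕ}
    (ε : Fin (k + 1) → Bool) :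
    word B ε = B (ε 0) ++ word B (fun j : Fin k => ε j.succ) := by
  rw [word, List.ofFn_succ, List.flatten_cons]
  rfl

lemma word_length {A : Automaton X} (B : Bool → List (A.S × X)) {N : ℕ}
    (hlen : ∀ b, (B b).length = N) {k : ℕ} (ε : Fin k → Bool) :
    (word B ε).length = k * N := by
  rw [word, length_flatten_const _ (fun l hl => by
    rw [List.mem_ofFn] at hl
    obtain ⟨j, rfl⟩ := hl
    exact hlen _)]
  simp

lemma word_loop {A : Automaton X} {s : A.S} (B : Bool → List (A.S × X))
    (hloop : ∀ b, IsLoopAt A s (B b)) {k : ℕ} (hk : 1 ≤ k) (ε : Fin k → Bool) :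
    IsLoopAt A s (word B ε) := by
  apply isLoopAt_flatten
  · rw [Ne, List.ofFn_eq_nil_iff]; omega
  · intro l hl
    rw [List.mem_ofFn] at hl
    obtain ⟨j, rfl⟩ := hl
    exact hloop _

lemma word_avoid {A : Automaton X} {e : A.S} (B : Bool → List (A.S × X))
    (havd : ∀ b, e ∉ (B b).map Prod.fst) {k : ℕ} (ε : Fin k → Bool) :
    e ∉ (word B ε).map Prod.fst := by
  intro hmem
  obtain ⟨p, hp, hpe⟩ := List.mem_map.mp hmem
  obtain ⟨l, hl, hpl⟩ := List.mem_flatten.mp hp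
  rw [List.mem_ofFn] at hl
  obtain ⟨j, rfl⟩ := hl
  exact havd (ε j) (List.mem_map.mpr ⟨p, hpl, hpe⟩)

lemma word_inj {A : Automaton X} (B : Bool → List (A.S × X)) {N : ℕ}
    (hlen : ∀ b, (B b).length = N) (hBne : B true ≠ B false) :
    ∀ (k : ℕ) (ε₁ ε₂ : Fin k → Bool), word B ε₁ = word B ε₂ → ε₁ = ε₂ := by
  intro k
  induction k with
  | zero => intro ε₁ ε₂ _; funext i; exact i.elim0
  | succ k ih =>
    intro ε₁ ε₂ h
    rw [word_succ, word_succ] at h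
    have hlen0 : (B (ε₁ 0)).length = (B (ε₂ 0)).length := by rw [hlen, hlen]
    obtain ⟨h1, h2⟩ := List.append_inj h hlen0
    have h0 : ε₁ 0 = ε₂ 0 := by
      by_contra hne
      rcases Bool.eq_false_or_eq_true (ε₁ 0) with hb | hb <;>
        rcases Bool.eq_false_or_eq_true (ε₂ 0) with hb' | hb' <;>
          rw [hb, hb'] at h1 hne <;> simp_all
    have htail := ih _ _ h2
    funext i
    refine Fin.cases ?_ ?_ i
    · exact h0
    · intro j
      exact congrFun htail j

/-- converting a loop (as a list) into a path of the automaton -/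
noncomputable def walkOfLoop (A : Automaton X) (e : A.S) {n : ℕ} (s : A.S) (hs : s ≠ e)
    (w : List (A.S × X)) (hlen : w.length = n) (hloop : IsLoopAt A s w)
    (havd : e ∉ w.map Prod.fst) :
    {px : (Fin (n + 1) → A.S) × (Fin n → X) //
      (∀ i, px.1 i ≠ e) ∧ ∀ i : Fin n, A.trans (px.1 i.castSucc) (px.2 i) = px.1 i.succ} := by
  refine ⟨(fun t => if h : (t : ℕ) < n then (w.get ⟨t, by omega⟩).1 else s,
    fun t => (w.get ⟨t, by omega⟩).2), ?_, ?_⟩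
  · intro i
    dsimp only
    split
    · rename_i h
      intro hEq
      exact havd (List.mem_map.mpr ⟨_, List.get_mem _ _, hEq⟩)
    · exact hs
  · intro i
    dsimp only
    rw [dif_pos (by simpa using i.isLt)]
    by_cases h1 : (i : ℕ) + 1 < n
    · rw [dif_pos (by simpa using h1)]
      have hch := List.isChain_iff_getElem.mp hloop.2.1 i (by omega)
      convert hch using 3 <;> simp
    · rw [dif_neg (by simpa using h1)]
      have hne : w ≠ [] := hloop.1
      have hcl := (hloop.2.2 hne).2
      have hlast : w.getLast hne = w.get ⟨(i : ℕ), by omega⟩ := by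
        rw [List.getLast_eq_getElem, List.get_eq_getElem]
        congr 1
        show w.length - 1 = (i : ℕ)
        omega
      rw [hlast] at hcl
      exact hcl

lemma walkOfLoop_inj (A : Automaton X) (e : A.S) {n : ℕ} (s : A.S) (hs : s ≠ e)
    (w w' : List (A.S × X)) (hlen : w.length = n) (hloop : IsLoopAt A s w)
    (havd : e ∉ w.map Prod.fst) (hlen' : w'.length = n) (hloop' : IsLoopAt A s w')
    (havd' : e ∉ w'.map Prod.fst)
    (h : walkOfLoop A e s hs w hlen hloop havd = walkOfLoop A e s hs w' hlen' hloop' havd') :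
    w = w' := by
  have h' := congrArg Subtype.val h
  rw [walkOfLoop, walkOfLoop, Prod.mk.injEq] at h'
  obtain ⟨hf, hg⟩ := h'
  apply List.ext_get (by omega)
  intro t ht1 ht2
  have hfx := congrFun hf ⟨t, by omega⟩
  have hgx := congrFun hg ⟨t, by omega⟩
  dsimp only at hfx hgx
  have hcond : ((⟨t, by omega⟩ : Fin (n + 1)) : ℕ) < n := by simpa using (by omega : t < n)
  rw [dif_pos hcond, dif_pos hcond] at hfx
  exact Prod.ext hfx hgx

lemma pow_le_pathCount [Fintype X] (A : Automaton X) (e s : A.S) (hs : s ≠ e)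
    (B : Bool → List (A.S × X)) (N : ℕ)
    (hlen : ∀ b, (B b).length = N) (hloop : ∀ b, IsLoopAt A s (B b))
    (havd : ∀ b, e ∉ (B b).map Prod.fst) (hBne : B true ≠ B false)
    (k : ℕ) (hk : 1 ≤ k) :
    2 ^ k ≤ A.pathCount e (k * N) := by
  classical
  rw [Automaton.pathCount]
  have hcard : Nat.card (Fin k → Bool) = 2 ^ k := by
    rw [Nat.card_eq_fintype_card, Fintype.card_fun]
    simp
  rw [← hcard]
  apply Nat.card_le_card_of_injective
    (fun ε => walkOfLoop A e s hs (word B ε) (word_length B hlen ε)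
      (word_loop B hloop hk ε) (word_avoid B havd ε))
  intro ε₁ ε₂ h
  exact word_inj B hlen hBne k ε₁ ε₂ (walkOfLoop_inj A e s hs _ _ _ _ _ _ _ _ h)

/-- exponential beats polynomial -/
lemma exists_exp_gt (M d : ℕ) : ∃ k : ℕ, 1 ≤ k ∧ M * (k + 1) ^ d < 2 ^ k := by
  have h := tendsto_pow_const_div_const_pow_of_one_lt d (by norm_num : (1 : ℝ) < 2)
  have hpos : (0 : ℝ) < 1 / (2 * (M + 1)) := by positivity
  obtain ⟨m, hm1, hm⟩ :=
    ((Filter.eventually_ge_atTop 2).and (h.eventually_lt_const hpos)).exists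
  refine ⟨m - 1, by omega, ?_⟩
  have hm' : m - 1 + 1 = m := by omega
  rw [hm']
  have key : (M : ℝ) * (m : ℝ) ^ d < 2 ^ (m - 1) := by
    have h2 : ((m : ℝ) ^ d) * (2 * (M + 1)) < 2 ^ m := by
      rw [div_lt_div_iff₀ (by positivity) (by positivity)] at hm
      calc ((m : ℝ) ^ d) * (2 * (M + 1)) < 1 * 2 ^ m := hm
        _ = 2 ^ m := by ring
    have h3 : (2 : ℝ) ^ m = 2 * 2 ^ (m - 1) := by
      rw [← pow_succ']
      congr 1
      omega
    have h4 : (0 : ℝ) < (m : ℝ) ^ d := by positivity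
    nlinarith
  have : ((M * m ^ d : ℕ) : ℝ) < ((2 ^ (m - 1) : ℕ) : ℝ) := by push_cast; exact key
  exact_mod_cast this

lemma backward [Fintype X] (A : Automaton X) (e : A.S)
    (hpoly : ∃ c d : ℕ, ∀ n, A.pathCount e n ≤ c * (n + 1) ^ d) :
    ∀ c₁ c₂ : List (A.S × X), A.IsCycle c₁ → A.IsCycle c₂ →
      e ∉ c₁.map Prod.fst → e ∉ c₂.map Prod.fst →
      (∃ s, s ∈ c₁.map Prod.fst ∧ s ∈ c₂.map Prod.fst) →
      ∃ m : ℕ, c₂ = c₁.rotate m := by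
  classical
  obtain ⟨cc, dd, hb⟩ := hpoly
  intro c₁ c₂ h₁ h₂ he₁ he₂ hshare
  obtain ⟨s, hs₁, hs₂⟩ := hshare
  have hse : s ≠ e := fun h => he₁ (h ▸ hs₁)
  obtain ⟨p₁, hp₁mem, hp₁⟩ := List.mem_map.mp hs₁
  obtain ⟨u₁, v₁, rfl⟩ := List.append_of_mem hp₁mem
  obtain ⟨p₂, hp₂mem, hp₂⟩ := List.mem_map.mp hs₂
  obtain ⟨u₂, v₂, rfl⟩ := List.append_of_mem hp₂mem
  set d₁ : List (A.S × X) := (p₁ :: v₁) ++ u₁ with hd₁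
  set d₂ : List (A.S × X) := (p₂ :: v₂) ++ u₂ with hd₂
  have hd₁rot : d₁ = (u₁ ++ p₁ :: v₁).rotate u₁.length := by
    rw [List.rotate_eq_drop_append_take (by simp), List.drop_left, List.take_left]
  have hd₂rot : d₂ = (u₂ ++ p₂ :: v₂).rotate u₂.length := by
    rw [List.rotate_eq_drop_append_take (by simp), List.drop_left, List.take_left]
  have hd₁cyc : A.IsCycle d₁ := hd₁rot ▸ isCycle_rotate h₁ _
  have hd₂cyc : A.IsCycle d₂ := hd₂rot ▸ isCycle_rotate h₂ _
  have hd₁ne : d₁ ≠ [] := by simp [hd₁]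
  have hd₂ne : d₂ ≠ [] := by simp [hd₂]
  have hd₁head : (d₁.head hd₁ne).1 = s := by
    have h' : d₁.head hd₁ne = p₁ := List.head_append_of_ne_nil (List.cons_ne_nil p₁ v₁)
    rw [h']; exact hp₁
  have hd₂head : (d₂.head hd₂ne).1 = s := by
    have h' : d₂.head hd₂ne = p₂ := List.head_append_of_ne_nil (List.cons_ne_nil p₂ v₂)
    rw [h']; exact hp₂
  have hd₁avoid : e ∉ d₁.map Prod.fst := by
    intro h
    obtain ⟨p, hp, hpe⟩ := List.mem_map.mp h
    rw [hd₁rot] at hp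
    exact he₁ (List.mem_map.mpr ⟨p, List.mem_rotate.mp hp, hpe⟩)
  have hd₂avoid : e ∉ d₂.map Prod.fst := by
    intro h
    obtain ⟨p, hp, hpe⟩ := List.mem_map.mp h
    rw [hd₂rot] at hp
    exact he₂ (List.mem_map.mpr ⟨p, List.mem_rotate.mp hp, hpe⟩)
  by_cases hdd : d₁ = d₂
  · have r1 : (u₁ ++ p₁ :: v₁).IsRotated (u₂ ++ p₂ :: v₂) := by
      refine List.IsRotated.trans ⟨u₁.length, hd₁rot.symm⟩ ?_
      rw [hdd, hd₂rot]
      exact (List.IsRotated.symm ⟨u₂.length, rfl⟩)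
    obtain ⟨m, hm⟩ := r1
    exact ⟨m, hm.symm⟩
  exfalso
  set L₁ := d₁.length with hL₁def
  set L₂ := d₂.length with hL₂def
  set N := L₁ * L₂ with hNdef
  have hL₁ : 1 ≤ L₁ := List.length_pos_iff.mpr hd₁ne
  have hL₂ : 1 ≤ L₂ := List.length_pos_iff.mpr hd₂ne
  set B : Bool → List (A.S × X) := fun b =>
    if b then (List.replicate L₂ d₁).flatten else (List.replicate L₁ d₂).flatten with hB
  have hBt : B true = (List.replicate L₂ d₁).flatten := by rw [hB]; simp
  have hBf : B false = (List.replicate L₁ d₂).flatten := by rw [hB]; simp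
  have hlen : ∀ b, (B b).length = N := by
    intro b
    cases b
    · rw [hBf, length_join_replicate]
    · rw [hBt, length_join_replicate, hNdef]
      ring
  have hloop : ∀ b, IsLoopAt A s (B b) := by
    intro b
    cases b
    · rw [hBf]
      exact isLoopAt_join_replicate (isLoopAt_of_cycle hd₂cyc hd₂ne s hd₂head) L₁ hL₁
    · rw [hBt]
      exact isLoopAt_join_replicate (isLoopAt_of_cycle hd₁cyc hd₁ne s hd₁head) L₂ hL₂
  have havd : ∀ b, e ∉ (B b).map Prod.fst := by
    intro b hmem
    obtain ⟨p, hp, hpe⟩ := List.mem_map.mp hmem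
    cases b
    · rw [hBf] at hp
      exact hd₂avoid (List.mem_map.mpr ⟨p, mem_join_replicate hp, hpe⟩)
    · rw [hBt] at hp
      exact hd₁avoid (List.mem_map.mpr ⟨p, mem_join_replicate hp, hpe⟩)
  have hBne : B true ≠ B false := by
    intro hEq
    rw [hBt, hBf] at hEq
    apply hdd
    have hsub1 : d₁ ⊆ d₂ := fun p hp =>
      mem_join_replicate (hEq ▸ subset_join_replicate hL₂ d₁ hp)
    have hsub2 : d₂ ⊆ d₁ := fun p hp =>
      mem_join_replicate (hEq.symm ▸ subset_join_replicate hL₁ d₂ hp)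
    have hmsub1 : (d₁.map Prod.fst).toFinset ⊆ (d₂.map Prod.fst).toFinset := by
      intro a ha
      rw [List.mem_toFinset] at *
      obtain ⟨p, hp, hpe⟩ := List.mem_map.mp ha
      exact List.mem_map.mpr ⟨p, hsub1 hp, hpe⟩
    have hmsub2 : (d₂.map Prod.fst).toFinset ⊆ (d₁.map Prod.fst).toFinset := by
      intro a ha
      rw [List.mem_toFinset] at *
      obtain ⟨p, hp, hpe⟩ := List.mem_map.mp ha
      exact List.mem_map.mpr ⟨p, hsub2 hp, hpe⟩
    have hc1 := Finset.card_le_card hmsub1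
    have hc2 := Finset.card_le_card hmsub2
    rw [List.toFinset_card_of_nodup hd₁cyc.2.1, List.toFinset_card_of_nodup hd₂cyc.2.1,
      List.length_map, List.length_map] at hc1 hc2
    have hLeq : L₁ = L₂ := le_antisymm hc1 hc2
    obtain ⟨m₂', hm₂'⟩ : ∃ m', L₂ = m' + 1 := ⟨L₂ - 1, by omega⟩
    obtain ⟨m₁', hm₁'⟩ : ∃ m', L₁ = m' + 1 := ⟨L₁ - 1, by omega⟩
    have e1 : ((List.replicate L₂ d₁).flatten).take L₁ = d₁ := by
      rw [hm₂', List.replicate_succ, List.flatten_cons]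
      exact List.take_left' rfl
    have e2 : ((List.replicate L₁ d₂).flatten).take L₂ = d₂ := by
      rw [hm₁', List.replicate_succ, List.flatten_cons]
      exact List.take_left' rfl
    rw [← e1, ← e2, hEq, hLeq]
  obtain ⟨k, hk1, hklt⟩ := exists_exp_gt (cc * (N + 1) ^ dd) dd
  have hple := pow_le_pathCount A e s hse B N hlen hloop havd hBne k hk1
  have hb' := hb (k * N)
  have hmono : cc * (k * N + 1) ^ dd ≤ (cc * (N + 1) ^ dd) * (k + 1) ^ dd := by
    have h1 : k * N + 1 ≤ (N + 1) * (k + 1) := by nlinarith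
    calc cc * (k * N + 1) ^ dd ≤ cc * ((N + 1) * (k + 1)) ^ dd :=
          Nat.mul_le_mul_left _ (Nat.pow_le_pow_left h1 dd)
      _ = (cc * (N + 1) ^ dd) * (k + 1) ^ dd := by rw [mul_pow, mul_assoc]
  have : (2 : ℕ) ^ k < 2 ^ k := lt_of_le_of_lt (hple.trans (hb'.trans hmono)) hklt
  exact absurd this (lt_irrefl _)

end Aut7

/-- A finite invertible automaton `A` with trivial state `e` is polynomial (distinct
nontrivial simple directed cycles are pairwise disjoint, where cycles are identified up
to rotation) if and only if the number of directed paths of length `n` avoiding the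
trivial state is bounded by a polynomial in `n`. -/
theorem stmt7 {X : Type*} [Fintype X] (A : Automaton X) (e : A.S)
    (he_trans : ∀ x, A.trans e x = e) (he_out : ∀ x, A.out e x = x) :
    (∀ c₁ c₂ : List (A.S × X), A.IsCycle c₁ → A.IsCycle c₂ →
        e ∉ c₁.map Prod.fst → e ∉ c₂.map Prod.fst →
        (∃ s, s ∈ c₁.map Prod.fst ∧ s ∈ c₂.map Prod.fst) →
        ∃ m : ℕ, c₂ = c₁.rotate m) ↔
      (∃ c d : ℕ, ∀ n, A.pathCount e n ≤ c * (n + 1) ^ d) := by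
  constructor
  · intro H
    exact ⟨Fintype.card A.S * (Fintype.card X + 1) ^ Fintype.card A.S, Fintype.card A.S,
      Aut7.forward A e H⟩
  · intro hpoly
    exact Aut7.backward A e hpoly
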